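/- Let A, B ⊆ ℤ^d be finite nonempty sets and let U = {0,1}^d ⊆ ℤ^d be the standard discrete cube. Then |A + B + U| ≥ 2^d · |A|^{1/2} · |B|^{1/2}. -/

import Mathlib

open scoped Pointwise
open Finset
set_option maxHeartbeats 1000000

lemma cube1_card (X Y : Finset ℤ) (hX : X.Nonempty) (hY : Y.Nonempty) :
    X.card + Y.card ≤ (X + Y + ({0, 1} : Finset ℤ)).card := by
  set M := Y.max' hY with hM
  set m := X.min' hX with hm
  have h1 : X.image (fun x => x + (M + 1)) ⊆ X + Y + ({0, 1} : Finset ℤ) := by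
    intro z hz
    obtain ⟨x, hx, rfl⟩ := Finset.mem_image.1 hz
    have : x + M + 1 ∈ X + Y + ({0, 1} : Finset ℤ) :=
      Finset.add_mem_add (Finset.add_mem_add hx (Y.max'_mem hY)) (by simp)
    simpa [add_assoc] using this
  have h2 : Y.image (fun y => m + y) ⊆ X + Y + ({0, 1} : Finset ℤ) := by
    intro z hz
    obtain ⟨y, hy, rfl⟩ := Finset.mem_image.1 hz
    have : m + y + 0 ∈ X + Y + ({0, 1} : Finset ℤ) :=
      Finset.add_mem_add (Finset.add_mem_add (X.min'_mem hX) hy) (by simp)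
    simpa using this
  have hdisj : Disjoint (X.image (fun x => x + (M + 1))) (Y.image (fun y => m + y)) := by
    rw [Finset.disjoint_left]
    rintro z hz1 hz2
    obtain ⟨x, hx, rfl⟩ := Finset.mem_image.1 hz1
    obtain ⟨y, hy, h⟩ := Finset.mem_image.1 hz2
    have hxm : m ≤ x := X.min'_le x hx
    have hyM : y ≤ M := Y.le_max' y hy
    omega
  calc X.card + Y.card
      = (X.image (fun x => x + (M + 1))).card + (Y.image (fun y => m + y)).card := by
        rw [Finset.card_image_of_injective _ (add_left_injective _),
          Finset.card_image_of_injective _ (add_right_injective _)]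
    _ = ((X.image (fun x => x + (M + 1))) ∪ (Y.image (fun y => m + y))).card :=
        (Finset.card_union_of_disjoint hdisj).symm
    _ ≤ _ := Finset.card_le_card (Finset.union_subset h1 h2)

lemma sorted_sum_le {ι κ : Type*} [DecidableEq ι] [DecidableEq κ] (K : ℝ) (hK : 0 ≤ K) :
    ∀ (n : ℕ) (P : Finset ι) (τ : ι → ℝ) (W : Finset κ) (c : κ → ℝ),
      P.card = n →
      (∀ k ∈ W, 0 ≤ c k) →
      (∀ p ∈ P, (P.filter fun q => τ p ≤ τ q).card ≤ (W.filter fun k => K * τ p ≤ c k).card) →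
      K * ∑ p ∈ P, τ p ≤ ∑ k ∈ W, c k := by
  intro n
  induction n with
  | zero =>
    intro P τ W c hP hc _
    rw [Finset.card_eq_zero.1 hP]
    simpa using Finset.sum_nonneg hc
  | succ n ih =>
    intro P τ W c hP hc hH
    have hPne : P.Nonempty := by rw [← Finset.card_pos, hP]; omega
    obtain ⟨p₀, hp₀, hmax⟩ := P.exists_max_image τ hPne
    have hWf : (W.filter fun k => K * τ p₀ ≤ c k).Nonempty := by
      rw [← Finset.card_pos]
      calc 0 < (P.filter fun q => τ p₀ ≤ τ q).card :=
            Finset.card_pos.2 ⟨p₀, Finset.mem_filter.2 ⟨hp₀, le_refl _⟩⟩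
        _ ≤ _ := hH p₀ hp₀
    obtain ⟨k', hk'⟩ := hWf
    have hWne : W.Nonempty := ⟨k', (Finset.mem_filter.1 hk').1⟩
    obtain ⟨k₀, hk₀, hkmax⟩ := W.exists_max_image c hWne
    have hck₀ : K * τ p₀ ≤ c k₀ :=
      le_trans (Finset.mem_filter.1 hk').2 (hkmax k' (Finset.mem_filter.1 hk').1)
    have key : ∀ p ∈ P.erase p₀,
        ((P.erase p₀).filter fun q => τ p ≤ τ q).card
          ≤ ((W.erase k₀).filter fun k => K * τ p ≤ c k).card := by
      intro p hp
      have hpP := Finset.mem_of_mem_erase hp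
      rw [Finset.filter_erase, Finset.filter_erase]
      have hp₀mem : p₀ ∈ P.filter fun q => τ p ≤ τ q :=
        Finset.mem_filter.2 ⟨hp₀, hmax p hpP⟩
      have hk₀mem : k₀ ∈ W.filter fun k => K * τ p ≤ c k :=
        Finset.mem_filter.2 ⟨hk₀,
          le_trans (mul_le_mul_of_nonneg_left (hmax p hpP) hK) hck₀⟩
      rw [Finset.card_erase_of_mem hp₀mem, Finset.card_erase_of_mem hk₀mem]
      have := hH p hpP
      omega
    have hrec := ih (P.erase p₀) τ (W.erase k₀) c
      (by rw [Finset.card_erase_of_mem hp₀, hP]; rfl)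
      (fun k hk => hc k (Finset.mem_of_mem_erase hk)) key
    rw [← Finset.add_sum_erase _ _ hp₀, ← Finset.add_sum_erase _ _ hk₀, mul_add]
    exact add_le_add hck₀ hrec

lemma card_filter_disjSum {α β : Type*} (s : Finset α) (t : Finset β) (q : α ⊕ β → Prop)
    [DecidablePred q] :
    ((s.disjSum t).filter q).card
      = (s.filter fun x => q (Sum.inl x)).card + (t.filter fun x => q (Sum.inr x)).card := by
  rw [← Finset.card_disjSum]
  congr 1
  ext x
  cases x <;> simp [Finset.inl_mem_disjSum, Finset.inr_mem_disjSum]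

lemma mem_fib {G : Type*} [DecidableEq G] (C : Finset (ℤ × G)) (i : ℤ) (x : G) :
    x ∈ (C.filter fun p => p.1 = i).image Prod.snd ↔ (i, x) ∈ C := by
  constructor
  · intro h
    obtain ⟨p, hp, rfl⟩ := Finset.mem_image.1 h
    obtain ⟨hpC, hp1⟩ := Finset.mem_filter.1 hp
    rw [← hp1]
    exact (show (p.1, p.2) = p from rfl) ▸ hpC
  · intro h
    exact Finset.mem_image.2 ⟨(i, x), Finset.mem_filter.2 ⟨h, rfl⟩, rfl⟩

lemma card_fib {G : Type*} [DecidableEq G] (C : Finset (ℤ × G)) :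
    C.card = ∑ i ∈ C.image Prod.fst, ((C.filter fun p => p.1 = i).image Prod.snd).card := by
  rw [Finset.card_eq_sum_card_fiberwise
    (f := Prod.fst) (t := C.image Prod.fst) (fun p hp => Finset.mem_image_of_mem _ hp)]
  refine Finset.sum_congr rfl fun i _ => ?_
  rw [Finset.card_image_of_injOn]
  intro p hp q hq h
  have h1 := (Finset.mem_filter.1 hp).2
  have h2 := (Finset.mem_filter.1 hq).2
  exact Prod.ext (by rw [h1, h2]) h

lemma abstract_main (K : ℝ) (hK : 0 ≤ K) (a b c : ℤ → ℝ)
    (I J W : Finset ℤ)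
    (hapos : ∀ i ∈ I, 0 < a i) (hbpos : ∀ j ∈ J, 0 < b j)
    (hc0 : ∀ k ∈ W, 0 ≤ c k)
    (hIne : I.Nonempty) (hJne : J.Nonempty)
    (hgeo : ∀ i ∈ I, ∀ j ∈ J, ∀ ε ∈ ({0, 1} : Finset ℤ),
      i + j + ε ∈ W ∧ K * (a i * b j) ≤ c (i + j + ε)) :
    K * (2 * Real.sqrt (∑ i ∈ I, a i ^ 2) * Real.sqrt (∑ j ∈ J, b j ^ 2))
      ≤ ∑ k ∈ W, c k := by
  classical
  obtain ⟨i₀, hi₀, hmaxa⟩ := I.exists_max_image a hIne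
  obtain ⟨j₀, hj₀, hmaxb⟩ := J.exists_max_image b hJne
  set α := a i₀ with hα
  set β := b j₀ with hβ
  have hα0 : 0 < α := hapos i₀ hi₀
  have hβ0 : 0 < β := hbpos j₀ hj₀
  have claim : ∀ s : ℝ, 0 ≤ s → s ≤ α * β →
      (I.filter fun i => s ≤ a i ^ 2 * (β / α)).card
        + (J.filter fun j => s ≤ b j ^ 2 * (α / β)).card
      ≤ (W.filter fun k => K * s ≤ c k).card := by
    intro s hs hsαβ
    have hXne : (I.filter fun i => s ≤ a i ^ 2 * (β / α)).Nonempty := by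
      refine ⟨i₀, Finset.mem_filter.2 ⟨hi₀, ?_⟩⟩
      have : a i₀ ^ 2 * (β / α) = α * β := by field_simp [sq]; ring
      rw [this]; exact hsαβ
    have hYne : (J.filter fun j => s ≤ b j ^ 2 * (α / β)).Nonempty := by
      refine ⟨j₀, Finset.mem_filter.2 ⟨hj₀, ?_⟩⟩
      have : b j₀ ^ 2 * (α / β) = α * β := by field_simp [sq]; ring
      rw [this]; exact hsαβ
    have hsub : (I.filter fun i => s ≤ a i ^ 2 * (β / α))
        + (J.filter fun j => s ≤ b j ^ 2 * (α / β)) + ({0, 1} : Finset ℤ)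
        ⊆ W.filter fun k => K * s ≤ c k := by
      intro k hk
      rw [Finset.mem_add] at hk
      obtain ⟨w, hw, ε, hε, rfl⟩ := hk
      rw [Finset.mem_add] at hw
      obtain ⟨i, hi, j, hj, rfl⟩ := hw
      obtain ⟨hiI, hsi⟩ := Finset.mem_filter.1 hi
      obtain ⟨hjJ, hsj⟩ := Finset.mem_filter.1 hj
      obtain ⟨hkW, hcge⟩ := hgeo i hiI j hjJ ε hε
      have hai := hapos i hiI
      have hbj := hbpos j hjJ
      have hab : s ≤ a i * b j := by
        have h1 : s * s ≤ (a i ^ 2 * (β / α)) * (b j ^ 2 * (α / β)) :=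
          mul_le_mul hsi hsj hs (by positivity)
        have h2 : (a i ^ 2 * (β / α)) * (b j ^ 2 * (α / β)) = (a i * b j) ^ 2 := by
          field_simp
        have h3 : s ^ 2 ≤ (a i * b j) ^ 2 := by rw [← h2]; nlinarith
        calc s = Real.sqrt (s ^ 2) := (Real.sqrt_sq hs).symm
          _ ≤ Real.sqrt ((a i * b j) ^ 2) := Real.sqrt_le_sqrt h3
          _ = a i * b j := Real.sqrt_sq (by positivity)
      refine Finset.mem_filter.2 ⟨hkW, le_trans ?_ hcge⟩
      exact mul_le_mul_of_nonneg_left hab hK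
    calc (I.filter fun i => s ≤ a i ^ 2 * (β / α)).card
          + (J.filter fun j => s ≤ b j ^ 2 * (α / β)).card
        ≤ _ := cube1_card _ _ hXne hYne
      _ ≤ _ := Finset.card_le_card hsub
  set τ : ℤ ⊕ ℤ → ℝ := Sum.elim (fun i => a i ^ 2 * (β / α)) (fun j => b j ^ 2 * (α / β))
    with hτ
  have hbridge : ∀ p ∈ I.disjSum J,
      ((I.disjSum J).filter fun q => τ p ≤ τ q).card
        ≤ (W.filter fun k => K * τ p ≤ c k).card := by
    intro p hp
    rw [card_filter_disjSum]
    have hs0 : 0 ≤ τ p := by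
      cases p <;> simp only [hτ, Sum.elim_inl, Sum.elim_inr] <;> positivity
    have hsαβ : τ p ≤ α * β := by
      cases p with
      | inl i =>
        have hiI : i ∈ I := by simpa using hp
        have h1 : a i ≤ α := hmaxa i hiI
        have h2 : 0 < a i := hapos i hiI
        simp only [hτ, Sum.elim_inl]
        calc a i ^ 2 * (β / α) ≤ α ^ 2 * (β / α) := by
              apply mul_le_mul_of_nonneg_right (by nlinarith) (by positivity)
          _ = α * β := by field_simp [sq]
      | inr j =>
        have h1 : b j ≤ β := hmaxb j (by simpa using hp)
        have h2 : 0 < b j := hbpos j (by simpa using hp)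
        simp only [hτ, Sum.elim_inr]
        calc b j ^ 2 * (α / β) ≤ β ^ 2 * (α / β) := by
              apply mul_le_mul_of_nonneg_right (by nlinarith) (by positivity)
          _ = α * β := by field_simp [sq]
    simpa only [hτ, Sum.elim_inl, Sum.elim_inr] using claim (τ p) hs0 hsαβ
  have hL4 := sorted_sum_le K hK ((I.disjSum J).card) (I.disjSum J) τ W c rfl hc0 hbridge
  have hsumτ : ∑ p ∈ I.disjSum J, τ p
      = (β / α) * (∑ i ∈ I, a i ^ 2) + (α / β) * (∑ j ∈ J, b j ^ 2) := by
    rw [Finset.sum_disjSum, Finset.mul_sum, Finset.mul_sum]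
    congr 1
    · exact Finset.sum_congr rfl fun i _ => by simp only [hτ, Sum.elim_inl]; ring
    · exact Finset.sum_congr rfl fun j _ => by simp only [hτ, Sum.elim_inr]; ring
  rw [hsumτ] at hL4
  refine le_trans ?_ hL4
  apply mul_le_mul_of_nonneg_left ?_ hK
  set u := ∑ i ∈ I, a i ^ 2 with hu
  set v := ∑ j ∈ J, b j ^ 2 with hv
  have hu0 : 0 ≤ u := Finset.sum_nonneg fun i _ => sq_nonneg _
  have hv0 : 0 ≤ v := Finset.sum_nonneg fun j _ => sq_nonneg _
  have h1 : Real.sqrt ((β / α) * u) ^ 2 = (β / α) * u := Real.sq_sqrt (by positivity)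
  have h2 : Real.sqrt ((α / β) * v) ^ 2 = (α / β) * v := Real.sq_sqrt (by positivity)
  have h3 : Real.sqrt ((β / α) * u) * Real.sqrt ((α / β) * v)
      = Real.sqrt u * Real.sqrt v := by
    rw [← Real.sqrt_mul (by positivity), ← Real.sqrt_mul hu0]
    congr 1
    field_simp
  nlinarith [sq_nonneg (Real.sqrt ((β / α) * u) - Real.sqrt ((α / β) * v))]


lemma step_lemma {G : Type*} [AddCommGroup G] [DecidableEq G]
    (K : ℝ) (hK : 0 ≤ K) (V : Finset G) (hV : V.Nonempty)
    (ih : ∀ A B : Finset G, A.Nonempty → B.Nonempty →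
      K * Real.sqrt A.card * Real.sqrt B.card ≤ ((A + B + V).card : ℝ))
    (A B : Finset (ℤ × G)) (hA : A.Nonempty) (hB : B.Nonempty) :
    2 * K * Real.sqrt A.card * Real.sqrt B.card
      ≤ ((A + B + (({0, 1} : Finset ℤ) ×ˢ V)).card : ℝ) := by
  classical
  set S := A + B + (({0, 1} : Finset ℤ) ×ˢ V) with hSdef
  set fA : ℤ → Finset G := fun i => (A.filter fun p => p.1 = i).image Prod.snd with hfA
  set fB : ℤ → Finset G := fun j => (B.filter fun p => p.1 = j).image Prod.snd with hfB
  set fS : ℤ → Finset G := fun k => (S.filter fun p => p.1 = k).image Prod.snd with hfS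
  have hfibA : ∀ i ∈ A.image Prod.fst, (fA i).Nonempty := by
    intro i hi
    obtain ⟨p, hp, rfl⟩ := Finset.mem_image.1 hi
    exact ⟨p.2, (mem_fib A p.1 p.2).2 hp⟩
  have hfibB : ∀ j ∈ B.image Prod.fst, (fB j).Nonempty := by
    intro j hj
    obtain ⟨p, hp, rfl⟩ := Finset.mem_image.1 hj
    exact ⟨p.2, (mem_fib B p.1 p.2).2 hp⟩
  have hfib : ∀ i j ε, ε ∈ ({0, 1} : Finset ℤ) → fA i + fB j + V ⊆ fS (i + j + ε) := by
    intro i j ε hε z hz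
    rw [Finset.mem_add] at hz
    obtain ⟨w, hw, v, hv, rfl⟩ := hz
    rw [Finset.mem_add] at hw
    obtain ⟨x, hx, y, hy, rfl⟩ := hw
    have hx' := (mem_fib A i x).1 hx
    have hy' := (mem_fib B j y).1 hy
    have hmem : ((i, x) + (j, y) + (ε, v)) ∈ S :=
      Finset.add_mem_add (Finset.add_mem_add hx' hy') (Finset.mem_product.2 ⟨hε, hv⟩)
    exact (mem_fib S _ _).2 hmem
  have hgeo : ∀ i ∈ A.image Prod.fst, ∀ j ∈ B.image Prod.fst, ∀ ε ∈ ({0, 1} : Finset ℤ),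
      i + j + ε ∈ S.image Prod.fst ∧
        K * (Real.sqrt ((fA i).card) * Real.sqrt ((fB j).card))
          ≤ ((fS (i + j + ε)).card : ℝ) := by
    intro i hi j hj ε hε
    have hAi := hfibA i hi
    have hBj := hfibB j hj
    have hsub2 := hfib i j ε hε
    obtain ⟨z, hz⟩ := (hAi.add hBj).add hV
    have hzS := hsub2 hz
    refine ⟨Finset.mem_image_of_mem Prod.fst ((mem_fib S _ _).1 hzS), ?_⟩
    calc K * (Real.sqrt ((fA i).card) * Real.sqrt ((fB j).card))
        = K * Real.sqrt ((fA i).card) * Real.sqrt ((fB j).card) := (mul_assoc _ _ _).symm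
      _ ≤ ((fA i + fB j + V).card : ℝ) := ih _ _ hAi hBj
      _ ≤ ((fS (i + j + ε)).card : ℝ) := by exact_mod_cast Finset.card_le_card hsub2
  have habs := abstract_main K hK
    (fun i => Real.sqrt ((fA i).card)) (fun j => Real.sqrt ((fB j).card))
    (fun k => ((fS k).card : ℝ))
    (A.image Prod.fst) (B.image Prod.fst) (S.image Prod.fst)
    (fun i hi => Real.sqrt_pos.2 (by exact_mod_cast (hfibA i hi).card_pos))
    (fun j hj => Real.sqrt_pos.2 (by exact_mod_cast (hfibB j hj).card_pos))
    (fun k _ => Nat.cast_nonneg _)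
    (hA.image _) (hB.image _) hgeo
  have hsa : ∑ i ∈ A.image Prod.fst, Real.sqrt ((fA i).card) ^ 2 = (A.card : ℝ) := by
    rw [show ((A.card : ℕ) : ℝ) = ∑ i ∈ A.image Prod.fst, ((fA i).card : ℝ) by
      rw [card_fib A]; push_cast; rfl]
    exact Finset.sum_congr rfl fun i _ => Real.sq_sqrt (Nat.cast_nonneg _)
  have hsb : ∑ j ∈ B.image Prod.fst, Real.sqrt ((fB j).card) ^ 2 = (B.card : ℝ) := by
    rw [show ((B.card : ℕ) : ℝ) = ∑ j ∈ B.image Prod.fst, ((fB j).card : ℝ) by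
      rw [card_fib B]; push_cast; rfl]
    exact Finset.sum_congr rfl fun j _ => Real.sq_sqrt (Nat.cast_nonneg _)
  have hsc : ∑ k ∈ S.image Prod.fst, ((fS k).card : ℝ) = (S.card : ℝ) := by
    rw [card_fib S]; push_cast; rfl
  rw [hsa, hsb, hsc] at habs
  calc 2 * K * Real.sqrt A.card * Real.sqrt B.card
      = K * (2 * Real.sqrt A.card * Real.sqrt B.card) := by ring
    _ ≤ (S.card : ℝ) := habs

lemma main_aux : ∀ (d : ℕ) (A B : Finset (Fin d → ℤ)), A.Nonempty → B.Nonempty →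
    (2 : ℝ) ^ d * Real.sqrt A.card * Real.sqrt B.card
      ≤ ((A + B + Fintype.piFinset fun _ : Fin d => ({0, 1} : Finset ℤ)).card : ℝ) := by
  intro d
  induction d with
  | zero =>
    intro A B hA hB
    have hA1 : A.card = 1 :=
      le_antisymm (Finset.card_le_one.2 fun a _ b _ => Subsingleton.elim a b) hA.card_pos
    have hB1 : B.card = 1 :=
      le_antisymm (Finset.card_le_one.2 fun a _ b _ => Subsingleton.elim a b) hB.card_pos
    have hne : (A + B + Fintype.piFinset fun _ : Fin 0 => ({0, 1} : Finset ℤ)).Nonempty :=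
      (hA.add hB).add ⟨fun _ => 0, by rw [Fintype.mem_piFinset]; intro i; exact i.elim0⟩
    rw [hA1, hB1]
    simp only [pow_zero, Nat.cast_one, Real.sqrt_one, mul_one, one_mul]
    exact_mod_cast hne.card_pos
  | succ d ih =>
    intro A B hA hB
    set φ : (Fin (d + 1) → ℤ) →+ (ℤ × (Fin d → ℤ)) :=
      { toFun := fun f => (f 0, fun i => f i.succ)
        map_zero' := rfl
        map_add' := fun f g => rfl } with hφ
    have hφinj : Function.Injective φ := by
      intro f g h
      have h1 : f 0 = g 0 := congrArg Prod.fst h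
      have h2 : ∀ i : Fin d, f i.succ = g i.succ := fun i => congrFun (congrArg Prod.snd h) i
      funext i
      exact Fin.cases h1 h2 i
    have himg : ∀ C : Finset (Fin (d + 1) → ℤ), (C.image φ).card = C.card :=
      fun C => Finset.card_image_of_injective _ hφinj
    have hUim : (Fintype.piFinset fun _ : Fin (d + 1) => ({0, 1} : Finset ℤ)).image φ
        = ({0, 1} : Finset ℤ) ×ˢ (Fintype.piFinset fun _ : Fin d => ({0, 1} : Finset ℤ)) := by
      ext x
      obtain ⟨k, g⟩ := x
      simp only [Finset.mem_image, Fintype.mem_piFinset, Finset.mem_product]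
      constructor
      · rintro ⟨f, hf, hfe⟩
        have hk : f 0 = k := congrArg Prod.fst hfe
        have hg : ∀ i : Fin d, f i.succ = g i := fun i => congrFun (congrArg Prod.snd hfe) i
        exact ⟨hk ▸ hf 0, fun i => hg i ▸ hf i.succ⟩
      · rintro ⟨hk, hg⟩
        refine ⟨Fin.cons k g, fun i => ?_, ?_⟩
        · refine Fin.cases ?_ ?_ i
          · simpa using hk
          · intro i; simpa using hg i
        · show ((Fin.cons k g : Fin (d + 1) → ℤ) 0,
              fun i : Fin d => (Fin.cons k g : Fin (d + 1) → ℤ) i.succ) = (k, g)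
          simp
    have hadd : ∀ C D : Finset (Fin (d + 1) → ℤ), (C + D).image φ = C.image φ + D.image φ :=
      fun C D => Finset.image_add φ
    have hstep := step_lemma ((2 : ℝ) ^ d) (by positivity)
      (Fintype.piFinset fun _ : Fin d => ({0, 1} : Finset ℤ))
      ⟨fun _ => 0, by simp⟩ ih (A.image φ) (B.image φ) (hA.image _) (hB.image _)
    rw [himg A, himg B] at hstep
    calc (2 : ℝ) ^ (d + 1) * Real.sqrt A.card * Real.sqrt B.card
        = 2 * (2 : ℝ) ^ d * Real.sqrt A.card * Real.sqrt B.card := by ring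
      _ ≤ ((A.image φ + B.image φ
            + (({0, 1} : Finset ℤ) ×ˢ Fintype.piFinset fun _ : Fin d => ({0, 1} : Finset ℤ))).card : ℝ) :=
          hstep
      _ = (((A + B + Fintype.piFinset fun _ : Fin (d + 1) => ({0, 1} : Finset ℤ)).image φ).card : ℝ) := by
          rw [hadd, hadd, hUim]
      _ = _ := by rw [himg]

theorem sumset_with_cube
    (d : ℕ) (A B : Finset (Fin d → ℤ)) (hA : A.Nonempty) (hB : B.Nonempty)
    (U : Finset (Fin d → ℤ))
    (hU : U = Fintype.piFinset fun _ : Fin d => ({0, 1} : Finset ℤ)) :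
    ((A + B + U).card : ℝ) ≥ 2 ^ d * Real.sqrt A.card * Real.sqrt B.card := by
  subst hU
  exact main_aux d A B hA hB
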